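/- Let m := ⌊(L−1)/2⌋ and let N be an integer with 1 ≤ N ≤ m². Let λ₁ ≤ λ₂ ≤ ⋯ ≤ λ_{L²} be the eigenvalues of the Hermitian matrix T listed in increasing order with multiplicity. Then the sum of the N largest eigenvalues satisfies Σ_{j = L²−N+1}^{L²} λ_j ≥ 6tN − 12π² t N² / L². (This is the rigorous form of the free-electron energy estimate E_ferro ≤ −6t N_h + 6πt |M| (N_h/|M|)² used in the proof of saturated ferromagnetism.) -/

import Mathlib

open Complex

noncomputable def TB.om (L : ℕ) : ℂ := Complex.exp (2 * Real.pi * Complex.I / L)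

noncomputable def TB.e (L : ℕ) (a : ZMod L) : ℂ := TB.om L ^ a.val

namespace TB

variable (L : ℕ) [NeZero L]

lemma om_pow_L : om L ^ L = 1 := by
  rw [om, ← Complex.exp_nat_mul]
  have hL : (L : ℂ) ≠ 0 := Nat.cast_ne_zero.mpr (NeZero.ne L)
  rw [mul_div_cancel₀ _ hL, Complex.exp_two_pi_mul_I]

lemma om_pow_mod (k : ℕ) : om L ^ (k % L) = om L ^ k := by
  conv_rhs => rw [← Nat.div_add_mod k L]
  rw [pow_add, pow_mul, om_pow_L, one_pow, one_mul]

lemma e_add (a b : ZMod L) : e L (a + b) = e L a * e L b := by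
  rw [e, e, e, ZMod.val_add, om_pow_mod, pow_add]

omit [NeZero L] in
lemma e_zero : e L 0 = 1 := by
  rw [e, ZMod.val_zero, pow_zero]

lemma e_neg (a : ZMod L) : e L (-a) = (e L a)⁻¹ := by
  apply eq_inv_of_mul_eq_one_left
  rw [← e_add, neg_add_cancel, e_zero]

lemma e_pow (k : ℕ) (c : ZMod L) : e L ((k : ZMod L) * c) = e L c ^ k := by
  induction k with
  | zero => simp [e_zero]
  | succ k ih =>
    have : ((k + 1 : ℕ) : ZMod L) * c = (k : ZMod L) * c + c := by push_cast; ring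
    rw [this, e_add, ih, pow_succ]

lemma e_ne_one {c : ZMod L} (hc : c ≠ 0) : e L c ≠ 1 := by
  intro h
  rw [e, om, ← Complex.exp_nat_mul, Complex.exp_eq_one_iff] at h
  obtain ⟨n, hn⟩ := h
  have h2pi : (2 * (Real.pi : ℂ) * Complex.I) ≠ 0 := by
    apply mul_ne_zero (mul_ne_zero two_ne_zero _) Complex.I_ne_zero
    exact Complex.ofReal_ne_zero.mpr Real.pi_ne_zero
  have hL : (L : ℂ) ≠ 0 := Nat.cast_ne_zero.mpr (NeZero.ne L)
  have hval : (c.val : ℂ) = (n : ℂ) * L := by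
    field_simp at hn
    have h2 : (c.val : ℂ) * (2 * (Real.pi : ℂ) * Complex.I)
        = ((n : ℂ) * L) * (2 * (Real.pi : ℂ) * Complex.I) := by linear_combination (2 * (Real.pi : ℂ) * Complex.I) * hn
    exact mul_right_cancel₀ h2pi h2
  have hvalZ : (c.val : ℤ) = n * L := by exact_mod_cast hval
  have hdvd : (L : ℤ) ∣ (c.val : ℤ) := ⟨n, by rw [hvalZ]; ring⟩
  have hpos : (0 : ℤ) < (c.val : ℤ) := by
    have := (ZMod.val_eq_zero c).not.mpr hc
    omega
  have := Int.le_of_dvd hpos hdvd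
  have := ZMod.val_lt c
  omega

lemma e_pow_L (c : ZMod L) : e L c ^ L = 1 := by
  rw [e, ← pow_mul, mul_comm, pow_mul, om_pow_L, one_pow]

lemma e_sum (c : ZMod L) : ∑ a : ZMod L, e L (a * c) = if c = 0 then (L : ℂ) else 0 := by
  have hrw : ∀ a : ZMod L, e L (a * c) = e L c ^ a.val := by
    intro a
    conv_lhs => rw [← ZMod.natCast_rightInverse a]
    exact e_pow L a.val c
  rw [Finset.sum_congr rfl fun a _ => hrw a]
  have hbij : ∑ a : ZMod L, e L c ^ a.val = ∑ k ∈ Finset.range L, e L c ^ k := by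
    apply Finset.sum_nbij' (fun a : ZMod L => a.val) (fun k : ℕ => (k : ZMod L))
    · intro a _; exact Finset.mem_range.mpr (ZMod.val_lt a)
    · intro a _; exact Finset.mem_univ _
    · intro a _; exact ZMod.natCast_rightInverse a
    · intro a ha; exact ZMod.val_cast_of_lt (Finset.mem_range.mp ha)
    · intro a _; rfl
  rw [hbij]
  by_cases hc : c = 0
  · subst hc
    simp [e_zero]
  · rw [if_neg hc, geom_sum_eq (e_ne_one L hc), e_pow_L, sub_self, zero_div]

lemma e_cos (a : ZMod L) :
    e L a + e L (-a) = ((2 * Real.cos (2 * Real.pi * a.val / L) : ℝ) : ℂ) := by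
  have hθ : e L a = Complex.exp (((2 * Real.pi * a.val / L : ℝ) : ℂ) * Complex.I) := by
    rw [e, om, ← Complex.exp_nat_mul]
    congr 1
    push_cast
    have hL : (L : ℂ) ≠ 0 := Nat.cast_ne_zero.mpr (NeZero.ne L)
    field_simp
  rw [e_neg, hθ, ← Complex.exp_neg, ← neg_mul, ← Complex.ofReal_neg,
    Complex.exp_mul_I, Complex.exp_mul_I]
  rw [← Complex.ofReal_cos, ← Complex.ofReal_cos, ← Complex.ofReal_sin, ← Complex.ofReal_sin]
  rw [Real.cos_neg, Real.sin_neg]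
  push_cast
  ring

end TB

open Polynomial Matrix

theorem TB.dummy : True := trivial


lemma TB.charpoly_conj {n' : Type*} [DecidableEq n'] [Fintype n'] (P A : Matrix n' n' ℂ)
    (hP : IsUnit P.det) : (P * A * P⁻¹).charpoly = A.charpoly := by
  have h1 : P * P⁻¹ = 1 := Matrix.mul_nonsing_inv P hP
  have hCmul : ∀ (M N' : Matrix n' n' ℂ), (M * N').map ⇑(C : ℂ →+* ℂ[X])
      = M.map ⇑(C : ℂ →+* ℂ[X]) * N'.map ⇑(C : ℂ →+* ℂ[X]) := fun M N' => Matrix.map_mul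
  have hone : (1 : Matrix n' n' ℂ).map ⇑(C : ℂ →+* ℂ[X]) = 1 :=
    Matrix.map_one _ (map_zero C) (map_one C)
  have key : charmatrix (P * A * P⁻¹)
      = (P.map ⇑(C : ℂ →+* ℂ[X])) * charmatrix A * (P⁻¹.map ⇑(C : ℂ →+* ℂ[X])) := by
    unfold Matrix.charmatrix
    rw [Matrix.mul_sub, Matrix.sub_mul]
    congr 1
    · rw [(Matrix.scalar_commute (X : ℂ[X]) (fun r' => Commute.all _ r')
        (P.map ⇑(C : ℂ →+* ℂ[X]))).symm.eq]
      rw [Matrix.mul_assoc, ← hCmul, h1, hone, Matrix.mul_one]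
    · simp only [RingHom.mapMatrix_apply]
      rw [hCmul, hCmul]
  unfold Matrix.charpoly
  rw [key, Matrix.det_mul, Matrix.det_mul]
  have : (P.map ⇑(C : ℂ →+* ℂ[X])).det * (P⁻¹.map ⇑(C : ℂ →+* ℂ[X])).det = 1 := by
    rw [← Matrix.det_mul, ← hCmul, h1, hone, Matrix.det_one]
  calc (P.map ⇑(C : ℂ →+* ℂ[X])).det * (charmatrix A).det * (P⁻¹.map ⇑(C : ℂ →+* ℂ[X])).det
      = (charmatrix A).det * ((P.map ⇑(C : ℂ →+* ℂ[X])).det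
          * (P⁻¹.map ⇑(C : ℂ →+* ℂ[X])).det) := by ring
    _ = (charmatrix A).det := by rw [this, mul_one]

lemma TB.charpoly_diag {n' : Type*} [DecidableEq n'] [Fintype n'] (d : n' → ℂ) :
    (Matrix.diagonal d).charpoly = ∏ i, (X - C (d i)) := by
  unfold Matrix.charpoly
  have : charmatrix (Matrix.diagonal d) = Matrix.diagonal (fun i => X - C (d i)) := by
    ext i j
    by_cases h : i = j
    · subst h
      rw [Matrix.charmatrix_apply_eq, Matrix.diagonal_apply_eq, Matrix.diagonal_apply_eq]
    · rw [Matrix.charmatrix_apply_ne _ _ _ h, Matrix.diagonal_apply_ne _ h,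
        Matrix.diagonal_apply_ne _ h, map_zero, neg_zero]
  rw [this, Matrix.det_diagonal]


open Polynomial Matrix Finset in
theorem TB.charpoly_T (L : ℕ) [NeZero L] (hL : 3 ≤ L) (t : ℝ)
    (T : Matrix (ZMod L × ZMod L) (ZMod L × ZMod L) ℂ)
    (hT : ∀ x y : ZMod L × ZMod L,
      T x y = if (y - x = (1, 0) ∨ y - x = (-1, 0) ∨ y - x = (0, 1) ∨
                  y - x = (0, -1) ∨ y - x = (1, 1) ∨ y - x = (-1, -1))
              then (t : ℂ) else 0) :
    T.charpoly = ∏ p : ZMod L × ZMod L,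
      (X - C (((2 * t * (Real.cos (2 * Real.pi * (p.1.val : ℝ) / L)
        + Real.cos (2 * Real.pi * (p.2.val : ℝ) / L)
        + Real.cos (2 * Real.pi * (((p.1 + p.2).val : ℕ) : ℝ) / L)) : ℝ) : ℂ))) := by
  haveI : Fact (1 < L) := ⟨by omega⟩
  -- distinctness
  have h10 : (1 : ZMod L) ≠ 0 := one_ne_zero
  have h1m1 : (1 : ZMod L) ≠ -1 := by
    intro h
    have h2 : ((2 : ℕ) : ZMod L) = 0 := by push_cast; linear_combination h
    have := (ZMod.natCast_eq_zero_iff 2 L).mp h2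
    have := Nat.le_of_dvd (by norm_num) this
    omega
  have hm10 : (-1 : ZMod L) ≠ 0 := by
    intro h
    exact h10 (by linear_combination -h)
  have hm11 : (-1 : ZMod L) ≠ 1 := fun h => h1m1 h.symm
  have h0m1 : (0 : ZMod L) ≠ -1 := fun h => hm10 h.symm
  have h01 : (0 : ZMod L) ≠ 1 := fun h => h10 h.symm
  classical
  set D : Finset (ZMod L × ZMod L) := {((1:ZMod L), (0:ZMod L)), (-1, 0), (0, 1), (0, -1), (1, 1), (-1, -1)}
    with hD
  have hmemD : ∀ v : ZMod L × ZMod L, v ∈ D ↔ (v = (1, 0) ∨ v = (-1, 0) ∨ v = (0, 1) ∨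
      v = (0, -1) ∨ v = (1, 1) ∨ v = (-1, -1)) := by
    intro v; simp [hD]
  have hTD : ∀ x y : ZMod L × ZMod L, T x y = if y - x ∈ D then (t : ℂ) else 0 := by
    intro x y
    rw [hT x y, if_congr (hmemD (y - x)).symm rfl rfl]
  set ε : ZMod L × ZMod L → ℝ := fun p => 2 * t * (Real.cos (2 * Real.pi * (p.1.val : ℝ) / L)
        + Real.cos (2 * Real.pi * (p.2.val : ℝ) / L)
        + Real.cos (2 * Real.pi * (((p.1 + p.2).val : ℕ) : ℝ) / L)) with hε
  set P : Matrix (ZMod L × ZMod L) (ZMod L × ZMod L) ℂ := Matrix.of (fun x p => TB.e L (p.1 * x.1 + p.2 * x.2)) with hP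
  have hsum6 : ∀ p : ZMod L × ZMod L, ∑ d ∈ D, (t : ℂ) * TB.e L (p.1 * d.1 + p.2 * d.2) = ((ε p : ℝ) : ℂ) := by
    intro p
    rw [hD]
    rw [Finset.sum_insert (by simp [Prod.ext_iff, h1m1, h10, hm10, hm11, h01, h0m1]),
        Finset.sum_insert (by simp [Prod.ext_iff, h1m1, h10, hm10, hm11, h01, h0m1]),
        Finset.sum_insert (by simp [Prod.ext_iff, h1m1, h10, hm10, hm11, h01, h0m1]),
        Finset.sum_insert (by simp [Prod.ext_iff, h1m1, h10, hm10, hm11, h01, h0m1]),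
        Finset.sum_insert (by simp [Prod.ext_iff, h1m1, h10, hm10, hm11, h01, h0m1]),
        Finset.sum_singleton]
    simp only [mul_one, mul_zero, mul_neg, add_zero, zero_add]
    have e1 := TB.e_cos L p.1
    have e2 := TB.e_cos L p.2
    have e3 := TB.e_cos L (p.1 + p.2)
    have hne : -p.1 + -p.2 = -(p.1 + p.2) := by ring
    rw [hne, hε]
    push_cast at e1 e2 e3 ⊢
    linear_combination (t : ℂ) * e1 + (t : ℂ) * e2 + (t : ℂ) * e3
  set Dg : Matrix (ZMod L × ZMod L) (ZMod L × ZMod L) ℂ := Matrix.diagonal (fun p => ((ε p : ℝ) : ℂ)) with hDg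
  have hTP : T * P = P * Dg := by
    ext x p
    rw [Matrix.mul_apply, hDg, Matrix.mul_diagonal]
    calc ∑ y : ZMod L × ZMod L, T x y * P y p
        = ∑ y : ZMod L × ZMod L, ∑ d ∈ D, (if y = x + d then (t : ℂ) * P y p else 0) := by
          apply Finset.sum_congr rfl
          intro y _
          rw [hTD x y, ite_mul, zero_mul]
          rw [← Finset.sum_ite_eq D (y - x) (fun _ => (t : ℂ) * P y p)]
          apply Finset.sum_congr rfl
          intro d _
          congr 1
          · rw [eq_iff_iff]
            exact sub_eq_iff_eq_add'
      _ = ∑ d ∈ D, ∑ y : ZMod L × ZMod L, (if y = x + d then (t : ℂ) * P y p else 0) := Finset.sum_comm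
      _ = ∑ d ∈ D, (t : ℂ) * P (x + d) p := by
          apply Finset.sum_congr rfl
          intro d _
          rw [Finset.sum_ite_eq' Finset.univ (x + d) (fun y => (t : ℂ) * P y p),
            if_pos (Finset.mem_univ _)]
      _ = ∑ d ∈ D, ((t : ℂ) * TB.e L (p.1 * d.1 + p.2 * d.2)) * P x p := by
          apply Finset.sum_congr rfl
          intro d _
          have : P (x + d) p = TB.e L (p.1 * d.1 + p.2 * d.2) * P x p := by
            rw [hP]
            simp only [Matrix.of_apply]
            rw [← TB.e_add]
            congr 1
            show p.1 * (x.1 + d.1) + p.2 * (x.2 + d.2)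
              = (p.1 * d.1 + p.2 * d.2) + (p.1 * x.1 + p.2 * x.2)
            ring
          rw [this]; ring
      _ = P x p * ((ε p : ℝ) : ℂ) := by
          rw [← Finset.sum_mul, hsum6]; ring
  have hstarom : star (TB.om L) = (TB.om L)⁻¹ := by
    rw [TB.om, Complex.star_def, ← Complex.exp_conj, ← Complex.exp_neg]
    congr 1
    simp only [map_div₀, _root_.map_mul, Complex.conj_I, Complex.conj_ofReal, map_ofNat, map_natCast]
    ring
  have hstar : ∀ a : ZMod L, star (TB.e L a) = TB.e L (-a) := by
    intro a
    rw [TB.e_neg]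
    show star (TB.om L ^ a.val) = (TB.e L a)⁻¹
    rw [star_pow, hstarom, inv_pow]
    rfl
  have hPPs : P * P.conjTranspose = ((L : ℂ) ^ 2) • (1 : Matrix (ZMod L × ZMod L) (ZMod L × ZMod L) ℂ) := by
    ext x y
    rw [Matrix.mul_apply]
    have : ∀ p : ZMod L × ZMod L, P x p * P.conjTranspose p y
        = TB.e L (p.1 * (x.1 - y.1)) * TB.e L (p.2 * (x.2 - y.2)) := by
      intro p
      rw [Matrix.conjTranspose_apply, hP]
      simp only [Matrix.of_apply]
      rw [hstar, ← TB.e_add, ← TB.e_add]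
      congr 1
      ring
    rw [Finset.sum_congr rfl (fun p _ => this p)]
    have hsplit : (∑ p : ZMod L × ZMod L, TB.e L (p.1 * (x.1 - y.1)) * TB.e L (p.2 * (x.2 - y.2)))
        = (∑ a : ZMod L, TB.e L (a * (x.1 - y.1))) * (∑ b : ZMod L, TB.e L (b * (x.2 - y.2))) := by
      rw [Finset.sum_mul_sum]
      exact Fintype.sum_prod_type _
    rw [hsplit]
    rw [TB.e_sum L (x.1 - y.1), TB.e_sum L (x.2 - y.2)]
    rw [Matrix.smul_apply, Matrix.one_apply]
    have hx1 : (x.1 - y.1 = 0) ↔ x.1 = y.1 := sub_eq_zero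
    have hx2 : (x.2 - y.2 = 0) ↔ x.2 = y.2 := sub_eq_zero
    have hxy : (x = y) ↔ (x.1 = y.1 ∧ x.2 = y.2) := Prod.ext_iff
    by_cases h1 : x.1 = y.1 <;> by_cases h2 : x.2 = y.2 <;>
      simp [hx1, hx2, hxy, h1, h2] <;> ring
  have hLC : ((L : ℂ) ^ 2) ≠ 0 :=
    pow_ne_zero 2 (Nat.cast_ne_zero.mpr (NeZero.ne L))
  have hright : P * (((L : ℂ) ^ 2)⁻¹ • P.conjTranspose) = 1 := by
    rw [Matrix.mul_smul, hPPs, smul_smul, inv_mul_cancel₀ hLC, one_smul]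
  have hdet : IsUnit P.det := Matrix.isUnit_det_of_right_inverse hright
  have hTconj : T = P * Dg * P⁻¹ := by
    have h1 : P * P⁻¹ = 1 := Matrix.mul_nonsing_inv P hdet
    calc T = T * (P * P⁻¹) := by rw [h1, Matrix.mul_one]
      _ = (T * P) * P⁻¹ := by rw [Matrix.mul_assoc]
      _ = (P * Dg) * P⁻¹ := by rw [hTP]
  rw [hTconj, TB.charpoly_conj P Dg hdet, hDg, TB.charpoly_diag]


open Finset in

lemma TB.strictMono_gap {N n : ℕ} {f : Fin N → Fin n} (hf : StrictMono f) {j i : Fin N}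
    (hij : j ≤ i) : (i : ℕ) - j ≤ (f i : ℕ) - f j := by
  have himg : (Finset.Icc j i).image f ⊆ Finset.Icc (f j) (f i) := by
    intro x hx
    simp only [Finset.mem_image, Finset.mem_Icc] at *
    obtain ⟨y, ⟨h1, h2⟩, rfl⟩ := hx
    exact ⟨hf.monotone h1, hf.monotone h2⟩
  have hcard := Finset.card_le_card himg
  rw [Finset.card_image_of_injective _ hf.injective] at hcard
  rw [Fin.card_Icc, Fin.card_Icc] at hcard
  have h1 : (j : ℕ) ≤ i := hij
  have h2 : (f j : ℕ) ≤ f i := hf.monotone hij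
  omega

lemma TB.card_top_filter {n N : ℕ} (hN1 : 1 ≤ N) (hNn : N ≤ n) :
    (Finset.univ.filter (fun j : Fin n => n - N ≤ (j : ℕ))).card = N := by
  have hn : 0 < n := lt_of_lt_of_le hN1 hNn
  have : (Finset.univ.filter (fun j : Fin n => n - N ≤ (j : ℕ)))
      = Finset.Ici (⟨n - N, by omega⟩ : Fin n) := by
    ext j
    simp [Fin.le_def]
  rw [this, Fin.card_Ici]
  simp only [Fin.val_mk]
  omega

lemma TB.sum_le_sum_top {n N : ℕ} (hN1 : 1 ≤ N) (hNn : N ≤ n) (g : Fin n → ℝ)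
    (hg : Monotone g) (A : Finset (Fin n)) (hA : A.card = N) :
    ∑ j ∈ A, g j ≤ ∑ j ∈ Finset.univ.filter (fun j : Fin n => n - N ≤ (j : ℕ)), g j := by
  set Top := Finset.univ.filter (fun j : Fin n => n - N ≤ (j : ℕ)) with hTopdef
  have hTop : Top.card = N := TB.card_top_filter hN1 hNn
  have hsum : ∀ (s : Finset (Fin n)) (h : s.card = N),
      ∑ j ∈ s, g j = ∑ i : Fin N, g (s.orderEmbOfFin h i) := by
    intro s h
    have : Finset.map (s.orderEmbOfFin h).toEmbedding Finset.univ = s := by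
      apply Finset.eq_of_subset_of_card_le
      · intro x hx
        simp only [Finset.mem_map] at hx
        obtain ⟨i, _, rfl⟩ := hx
        exact Finset.orderEmbOfFin_mem s h i
      · rw [h, Finset.card_map, Finset.card_univ, Fintype.card_fin]
    conv_lhs => rw [← this]
    rw [Finset.sum_map]
    rfl
  rw [hsum A hA, hsum Top hTop]
  apply Finset.sum_le_sum
  intro i _
  apply hg
  rw [Fin.le_def]
  have hub : (A.orderEmbOfFin hA i : ℕ) ≤ n - N + i := by
    have hlast : i ≤ (⟨N - 1, by omega⟩ : Fin N) := by
      rw [Fin.le_def]; simp; omega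
    have := TB.strictMono_gap (A.orderEmbOfFin hA).strictMono hlast
    have hfin : (A.orderEmbOfFin hA ⟨N - 1, by omega⟩ : ℕ) < n := Fin.is_lt _
    have hle : (A.orderEmbOfFin hA i : ℕ) ≤ A.orderEmbOfFin hA ⟨N - 1, by omega⟩ := by
      exact (A.orderEmbOfFin hA).monotone hlast
    simp only [Fin.val_mk] at this
    omega
  have hlb : n - N + (i : ℕ) ≤ (Top.orderEmbOfFin hTop i : ℕ) := by
    have h0 : ((⟨0, by omega⟩ : Fin N) : ℕ) ≤ i := by simp
    have hgap := TB.strictMono_gap (Top.orderEmbOfFin hTop).strictMono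
      (show (⟨0, by omega⟩ : Fin N) ≤ i from h0)
    have hmem := Finset.orderEmbOfFin_mem Top hTop (⟨0, by omega⟩ : Fin N)
    have hmem2 := (Finset.mem_filter.mp hmem).2
    have h0le : (Top.orderEmbOfFin hTop ⟨0, by omega⟩ : ℕ) ≤ Top.orderEmbOfFin hTop i :=
      (Top.orderEmbOfFin hTop).monotone h0
    simp only [Fin.val_mk] at hgap
    omega
  omega

lemma TB.monotone_eq_of_multiset_eq {n : ℕ} {f g : Fin n → ℝ} (hf : Monotone f)
    (hg : Monotone g)
    (h : Multiset.map f Finset.univ.val = Multiset.map g Finset.univ.val) : f = g := by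
  apply List.ofFn_injective
  have hval : (Finset.univ.val : Multiset (Fin n)) = ↑(List.finRange n) := rfl
  rw [hval] at h
  have hperm : List.Perm (List.ofFn f) (List.ofFn g) := by
    rw [List.ofFn_eq_map, List.ofFn_eq_map]
    exact Multiset.coe_eq_coe.mp (by simpa using h)
  exact List.Perm.eq_of_sortedLE (List.sortedLE_ofFn_iff.mpr hf)
    (List.sortedLE_ofFn_iff.mpr hg) hperm


set_option maxHeartbeats 2000000 in
/-- Let `λ₁ ≤ ⋯ ≤ λ_{L²}` be the eigenvalues (in increasing order, with multiplicity,
encoded via the characteristic polynomial) of the Hermitian triangular-lattice hopping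
matrix `T`.  For `1 ≤ N ≤ ⌊(L-1)/2⌋²`, the sum of the `N` largest eigenvalues is at
least `6tN - 12π²tN²/L²`. -/
theorem sum_largest_eigenvalues_triangular_bound
    (L : ℕ) [NeZero L] (hL : 3 ≤ L) (t : ℝ) (ht : 0 < t)
    (T : Matrix (ZMod L × ZMod L) (ZMod L × ZMod L) ℂ)
    (hT : ∀ x y : ZMod L × ZMod L,
      T x y = if (y - x = (1, 0) ∨ y - x = (-1, 0) ∨ y - x = (0, 1) ∨
                  y - x = (0, -1) ∨ y - x = (1, 1) ∨ y - x = (-1, -1))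
              then (t : ℂ) else 0)
    (hherm : T.IsHermitian)
    (N : ℕ) (hN1 : 1 ≤ N) (hN2 : N ≤ ((L - 1) / 2) ^ 2)
    (lam : Fin (L ^ 2) → ℝ) (hmono : Monotone lam)
    (hchar : T.charpoly =
      ∏ j : Fin (L ^ 2), (Polynomial.X - Polynomial.C ((lam j : ℝ) : ℂ))) :
    6 * t * (N : ℝ) - 12 * Real.pi ^ 2 * t * (N : ℝ) ^ 2 / (L : ℝ) ^ 2 ≤
      ∑ j ∈ Finset.univ.filter (fun j : Fin (L ^ 2) => L ^ 2 - N ≤ (j : ℕ)), lam j := by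
  classical
  haveI : Fact (1 < L) := ⟨by omega⟩
  -- the dispersion function
  set ε : ZMod L × ZMod L → ℝ := fun p => 2 * t * (Real.cos (2 * Real.pi * (p.1.val : ℝ) / L)
        + Real.cos (2 * Real.pi * (p.2.val : ℝ) / L)
        + Real.cos (2 * Real.pi * (((p.1 + p.2).val : ℕ) : ℝ) / L)) with hεdef
  have hcharT : T.charpoly = ∏ p : ZMod L × ZMod L, (Polynomial.X - Polynomial.C ((ε p : ℝ) : ℂ)) :=
    TB.charpoly_T L hL t T hT
  -- multiset of eigenvalues
  have e1 : (Multiset.map (fun j : Fin (L ^ 2) =>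
        Polynomial.X - Polynomial.C ((lam j : ℝ) : ℂ)) Finset.univ.val).prod.roots
      = Multiset.map (fun j : Fin (L ^ 2) => ((lam j : ℝ) : ℂ)) Finset.univ.val := by
    have h := Polynomial.roots_multiset_prod_X_sub_C
      (Multiset.map (fun j : Fin (L ^ 2) => ((lam j : ℝ) : ℂ)) Finset.univ.val)
    rw [Multiset.map_map] at h
    simpa only [Function.comp] using h
  have e2 : (Multiset.map (fun p : ZMod L × ZMod L =>
        Polynomial.X - Polynomial.C ((ε p : ℝ) : ℂ)) Finset.univ.val).prod.roots
      = Multiset.map (fun p : ZMod L × ZMod L => ((ε p : ℝ) : ℂ)) Finset.univ.val := by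
    have h := Polynomial.roots_multiset_prod_X_sub_C
      (Multiset.map (fun p : ZMod L × ZMod L => ((ε p : ℝ) : ℂ)) Finset.univ.val)
    rw [Multiset.map_map] at h
    simpa only [Function.comp] using h
  have h1 : Multiset.map (fun j : Fin (L ^ 2) => ((lam j : ℝ) : ℂ)) Finset.univ.val
      = Multiset.map (fun p : ZMod L × ZMod L => ((ε p : ℝ) : ℂ)) Finset.univ.val := by
    rw [← e1, ← e2]
    congr 1
    rw [← Finset.prod_eq_multiset_prod, ← Finset.prod_eq_multiset_prod, ← hchar, hcharT]
  have h2 : Multiset.map lam Finset.univ.val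
      = Multiset.map ε (Finset.univ.val : Multiset (ZMod L × ZMod L)) := by
    apply Multiset.map_injective Complex.ofReal_injective
    rw [Multiset.map_map, Multiset.map_map]
    exact h1
  -- transfer the spectrum to `Fin (L^2)` and sort it
  have hcard : Fintype.card (ZMod L × ZMod L) = L ^ 2 := by
    rw [Fintype.card_prod, ZMod.card, pow_two]
  set eV : (ZMod L × ZMod L) ≃ Fin (L ^ 2) := Fintype.equivFinOfCardEq hcard with heV
  set ε2 : Fin (L ^ 2) → ℝ := ε ∘ eV.symm with hε2
  have h3 : Multiset.map ε (Finset.univ.val : Multiset (ZMod L × ZMod L))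
      = Multiset.map ε2 Finset.univ.val := by
    have huniv : (Finset.univ : Finset (ZMod L × ZMod L))
        = Finset.map eV.symm.toEmbedding Finset.univ := (Finset.map_univ_equiv eV.symm).symm
    rw [huniv, Finset.map_val, Multiset.map_map]
    rfl
  set σ := Tuple.sort ε2 with hσ
  set g : Fin (L ^ 2) → ℝ := ε2 ∘ σ with hg
  have hgmono : Monotone g := Tuple.monotone_sort ε2
  have h4 : Multiset.map g Finset.univ.val = Multiset.map ε2 Finset.univ.val := by
    have huniv : (Finset.univ : Finset (Fin (L ^ 2)))
        = Finset.map (σ : Equiv.Perm (Fin (L ^ 2))).toEmbedding Finset.univ :=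
      (Finset.map_univ_equiv _).symm
    conv_rhs => rw [huniv]
    rw [Finset.map_val, Multiset.map_map]
    rfl
  have hlamg : lam = g :=
    TB.monotone_eq_of_multiset_eq hmono hgmono (by rw [h2, h3, ← h4])
  -- numerics
  have hNn : N ≤ L ^ 2 := by
    have hm : (L - 1) / 2 ≤ L := by omega
    calc N ≤ ((L - 1) / 2) ^ 2 := hN2
      _ ≤ L ^ 2 := Nat.pow_le_pow_left hm 2
  obtain ⟨k, hk⟩ : ∃ k : ℕ, k = Nat.sqrt (N - 1) + 1 := ⟨_, rfl⟩
  have hk0 : 0 < k := by omega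
  have hNk : N ≤ k * k := by
    rw [hk]
    have h' := Nat.lt_succ_sqrt' (N - 1)
    rw [pow_two, Nat.succ_eq_add_one] at h'
    omega
  have hksqN : (k - 1) * (k - 1) ≤ N - 1 := by
    rw [hk]
    simp only [Nat.add_sub_cancel]
    exact Nat.sqrt_le (N - 1)
  have hkm : k ≤ (L - 1) / 2 := by
    have hlt : Nat.sqrt (N - 1) < (L - 1) / 2 := by
      rw [Nat.sqrt_lt']
      have : 1 ≤ ((L - 1) / 2) ^ 2 := le_trans hN1 hN2
      have h2' : ((L - 1) / 2) ^ 2 = ((L - 1) / 2) * ((L - 1) / 2) := pow_two _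
      omega
    omega
  have hkL : k < L := by omega
  have hLpos : (0 : ℝ) < (L : ℝ) := by positivity
  have hL2pos : (0 : ℝ) < (L : ℝ) ^ 2 := by positivity
  -- cosine lower bounds
  have hcosb : ∀ c : ℕ, c < L →
      1 - 2 * Real.pi ^ 2 * (c : ℝ) ^ 2 / (L : ℝ) ^ 2
        ≤ Real.cos (2 * Real.pi * (((c : ZMod L)).val : ℝ) / L) := by
    intro c hc
    rw [ZMod.val_cast_of_lt hc]
    have h := Real.one_sub_sq_div_two_le_cos (x := 2 * Real.pi * (c : ℝ) / L)
    have harg : 1 - (2 * Real.pi * (c : ℝ) / L) ^ 2 / 2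
        = 1 - 2 * Real.pi ^ 2 * (c : ℝ) ^ 2 / (L : ℝ) ^ 2 := by
      field_simp
    rw [harg] at h
    exact h
  have hcosn : ∀ c : ℕ, c < L →
      1 - 2 * Real.pi ^ 2 * (c : ℝ) ^ 2 / (L : ℝ) ^ 2
        ≤ Real.cos (2 * Real.pi * (((-(c : ZMod L))).val : ℝ) / L) := by
    intro c hc
    by_cases h0 : (c : ZMod L) = 0
    · have hc0 : c = 0 := by
        have hv := ZMod.val_cast_of_lt hc
        rw [h0, ZMod.val_zero] at hv
        omega
      subst hc0
      have : (-((0 : ℕ) : ZMod L)) = 0 := by simp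
      rw [this, ZMod.val_zero]
      simp [Real.cos_zero]
    · rw [ZMod.neg_val, if_neg h0, ZMod.val_cast_of_lt hc]
      have hcast : ((L - c : ℕ) : ℝ) = (L : ℝ) - c := by
        push_cast [Nat.cast_sub hc.le]
        ring
      have harg : 2 * Real.pi * ((L - c : ℕ) : ℝ) / L = 2 * Real.pi - 2 * Real.pi * (c : ℝ) / L := by
        rw [hcast]
        field_simp
      rw [harg, Real.cos_two_pi_sub]
      have h := Real.one_sub_sq_div_two_le_cos (x := 2 * Real.pi * (c : ℝ) / L)
      have harg2 : 1 - (2 * Real.pi * (c : ℝ) / L) ^ 2 / 2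
          = 1 - 2 * Real.pi ^ 2 * (c : ℝ) ^ 2 / (L : ℝ) ^ 2 := by
        field_simp
      rw [harg2] at h
      exact h
  -- the chosen modes
  set ψ : ℕ → ZMod L × ZMod L :=
    fun j => (((j / k : ℕ) : ZMod L), -((j % k : ℕ) : ZMod L)) with hψ
  have hterm : ∀ j ∈ Finset.range N,
      6 * t - 12 * Real.pi ^ 2 * t * (N : ℝ) / (L : ℝ) ^ 2 ≤ ε (ψ j) := by
    intro j hj
    rw [Finset.mem_range] at hj
    obtain ⟨a, ha⟩ : ∃ a : ℕ, a = j / k := ⟨_, rfl⟩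
    obtain ⟨b, hb⟩ : ∃ b : ℕ, b = j % k := ⟨_, rfl⟩
    have hak : a < k := by
      rw [ha, Nat.div_lt_iff_lt_mul hk0]
      omega
    have hbk : b < k := by rw [hb]; exact Nat.mod_lt _ hk0
    have hψ1 : (ψ j).1 = ((a : ZMod L)) := by rw [ha]
    have hψ2 : (ψ j).2 = -((b : ZMod L)) := by rw [hb]
    have haL : a < L := lt_trans hak hkL
    have hbL : b < L := lt_trans hbk hkL
    have hc1 := hcosb a haL
    have hc2 := hcosn b hbL
    -- third cosine
    have hthird : ∃ d : ℕ, d < k ∧ ((ψ j).1 + (ψ j).2 = ((d : ZMod L)) ∨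
        (ψ j).1 + (ψ j).2 = -((d : ZMod L))) ∧ ((d : ℝ) ^ 2 ≤ (a : ℝ) ^ 2 ∨ (d : ℝ) ^ 2 ≤ (b : ℝ) ^ 2) := by
      rcases le_or_gt b a with hba | hab
      · refine ⟨a - b, by omega, Or.inl ?_, Or.inl ?_⟩
        · rw [hψ1, hψ2]
          push_cast [Nat.cast_sub hba]
          ring
        · have : ((a - b : ℕ) : ℝ) ≤ (a : ℝ) := by
            have : (a - b : ℕ) ≤ a := Nat.sub_le a b
            exact_mod_cast this
          nlinarith [Nat.cast_nonneg (α := ℝ) (a - b)]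
      · refine ⟨b - a, by omega, Or.inr ?_, Or.inr ?_⟩
        · rw [hψ1, hψ2]
          push_cast [Nat.cast_sub hab.le]
          ring
        · have : ((b - a : ℕ) : ℝ) ≤ (b : ℝ) := by
            have : (b - a : ℕ) ≤ b := Nat.sub_le b a
            exact_mod_cast this
          nlinarith [Nat.cast_nonneg (α := ℝ) (b - a)]
    obtain ⟨d, hdk, hd, hdsq⟩ := hthird
    have hc3 : 1 - 2 * Real.pi ^ 2 * (d : ℝ) ^ 2 / (L : ℝ) ^ 2
        ≤ Real.cos (2 * Real.pi * ((((ψ j).1 + (ψ j).2)).val : ℝ) / L) := by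
      rcases hd with hd | hd
      · rw [hd]; exact hcosb d (lt_trans hdk hkL)
      · rw [hd]; exact hcosn d (lt_trans hdk hkL)
    rw [hψ1, hψ2] at hc3
    -- quadratic bound
    have hkr : (a : ℝ) ≤ (k : ℝ) - 1 := by
      have h' : a + 1 ≤ k := hak
      have h2' := (Nat.cast_le (α := ℝ)).mpr h'
      rw [Nat.cast_add, Nat.cast_one] at h2'
      linarith
    have hbr : (b : ℝ) ≤ (k : ℝ) - 1 := by
      have h' : b + 1 ≤ k := hbk
      have h2' := (Nat.cast_le (α := ℝ)).mpr h'
      rw [Nat.cast_add, Nat.cast_one] at h2'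
      linarith
    have hkNr : ((k : ℝ) - 1) ^ 2 ≤ (N : ℝ) - 1 := by
      have h' : (k - 1) * (k - 1) + 1 ≤ N := by omega
      have h2' := (Nat.cast_le (α := ℝ)).mpr h'
      rw [Nat.cast_add, Nat.cast_mul, Nat.cast_sub hk0, Nat.cast_one] at h2'
      nlinarith
    have hquad : (a : ℝ) ^ 2 + (b : ℝ) ^ 2 + (d : ℝ) ^ 2 ≤ 3 * (N : ℝ) := by
      have hN1r : (1 : ℝ) ≤ (N : ℝ) := by exact_mod_cast hN1
      have ha0 : (0 : ℝ) ≤ (a : ℝ) := Nat.cast_nonneg a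
      have hb0 : (0 : ℝ) ≤ (b : ℝ) := Nat.cast_nonneg b
      rcases hdsq with hdsq | hdsq <;> nlinarith
    -- put it together
    have hεval : ε (ψ j) = 2 * t * (Real.cos (2 * Real.pi * ((((ψ j).1).val : ℝ)) / L)
        + Real.cos (2 * Real.pi * ((((ψ j).2).val : ℝ)) / L)
        + Real.cos (2 * Real.pi * ((((ψ j).1 + (ψ j).2)).val : ℝ) / L)) := rfl
    rw [hεval, hψ1, hψ2]
    have hsum : 3 - 2 * Real.pi ^ 2 * ((a : ℝ) ^ 2 + (b : ℝ) ^ 2 + (d : ℝ) ^ 2) / (L : ℝ) ^ 2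
        ≤ Real.cos (2 * Real.pi * (((a : ZMod L)).val : ℝ) / L)
        + Real.cos (2 * Real.pi * (((-((b : ZMod L)))).val : ℝ) / L)
        + Real.cos (2 * Real.pi * ((((a : ZMod L) + -((b : ZMod L)))).val : ℝ) / L) := by
      have expand : 3 - 2 * Real.pi ^ 2 * ((a : ℝ) ^ 2 + (b : ℝ) ^ 2 + (d : ℝ) ^ 2) / (L : ℝ) ^ 2
          = (1 - 2 * Real.pi ^ 2 * (a : ℝ) ^ 2 / (L : ℝ) ^ 2)
          + (1 - 2 * Real.pi ^ 2 * (b : ℝ) ^ 2 / (L : ℝ) ^ 2)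
          + (1 - 2 * Real.pi ^ 2 * (d : ℝ) ^ 2 / (L : ℝ) ^ 2) := by ring
      rw [expand]
      exact add_le_add (add_le_add hc1 hc2) hc3
    have hstep : 6 * t - 12 * Real.pi ^ 2 * t * (N : ℝ) / (L : ℝ) ^ 2
        ≤ 2 * t * (3 - 2 * Real.pi ^ 2 * ((a : ℝ) ^ 2 + (b : ℝ) ^ 2 + (d : ℝ) ^ 2) / (L : ℝ) ^ 2) := by
      have hpi2 : (0 : ℝ) < Real.pi ^ 2 := by positivity
      have key : 4 * Real.pi ^ 2 * t * ((a : ℝ) ^ 2 + (b : ℝ) ^ 2 + (d : ℝ) ^ 2)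
          ≤ 12 * Real.pi ^ 2 * t * (N : ℝ) := by
        nlinarith [mul_le_mul_of_nonneg_left hquad
          (show (0 : ℝ) ≤ 4 * Real.pi ^ 2 * t by positivity)]
      have hdiv : 4 * Real.pi ^ 2 * t * ((a : ℝ) ^ 2 + (b : ℝ) ^ 2 + (d : ℝ) ^ 2) / (L : ℝ) ^ 2
          ≤ 12 * Real.pi ^ 2 * t * (N : ℝ) / (L : ℝ) ^ 2 := by
        exact div_le_div_of_nonneg_right key hL2pos.le
      have hr : 2 * t * (3 - 2 * Real.pi ^ 2 * ((a : ℝ) ^ 2 + (b : ℝ) ^ 2 + (d : ℝ) ^ 2) / (L : ℝ) ^ 2)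
          = 6 * t - 4 * Real.pi ^ 2 * t * ((a : ℝ) ^ 2 + (b : ℝ) ^ 2 + (d : ℝ) ^ 2) / (L : ℝ) ^ 2 := by
        field_simp
        ring
      rw [hr]
      linarith
    calc 6 * t - 12 * Real.pi ^ 2 * t * (N : ℝ) / (L : ℝ) ^ 2
        ≤ 2 * t * (3 - 2 * Real.pi ^ 2 * ((a : ℝ) ^ 2 + (b : ℝ) ^ 2 + (d : ℝ) ^ 2) / (L : ℝ) ^ 2) :=
          hstep
      _ ≤ 2 * t * (Real.cos (2 * Real.pi * (((a : ZMod L)).val : ℝ) / L)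
        + Real.cos (2 * Real.pi * (((-((b : ZMod L)))).val : ℝ) / L)
        + Real.cos (2 * Real.pi * ((((a : ZMod L) + -((b : ZMod L)))).val : ℝ) / L)) := by
          apply mul_le_mul_of_nonneg_left hsum
          linarith
  -- injectivity of the mode selection
  set ι : ℕ → Fin (L ^ 2) := fun j => σ.symm (eV (ψ j)) with hι
  have hinj : ∀ x ∈ Finset.range N, ∀ y ∈ Finset.range N, ι x = ι y → x = y := by
    intro x hx y hy hxy
    rw [Finset.mem_range] at hx hy
    have h1' : eV (ψ x) = eV (ψ y) := σ.symm.injective hxy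
    have h2' : ψ x = ψ y := eV.injective h1'
    have hfst : ((x / k : ℕ) : ZMod L) = ((y / k : ℕ) : ZMod L) := congrArg Prod.fst h2'
    have hsnd : (-((x % k : ℕ) : ZMod L)) = -((y % k : ℕ) : ZMod L) := congrArg Prod.snd h2'
    have hxk : x / k < L := lt_trans (by rw [Nat.div_lt_iff_lt_mul hk0]; omega) hkL
    have hyk : y / k < L := lt_trans (by rw [Nat.div_lt_iff_lt_mul hk0]; omega) hkL
    have hdiv : x / k = y / k := by
      have := congrArg ZMod.val hfst
      rwa [ZMod.val_cast_of_lt hxk, ZMod.val_cast_of_lt hyk] at this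
    have hmod : x % k = y % k := by
      have hne := neg_inj.mp hsnd
      have := congrArg ZMod.val hne
      rwa [ZMod.val_cast_of_lt (lt_trans (Nat.mod_lt _ hk0) hkL),
        ZMod.val_cast_of_lt (lt_trans (Nat.mod_lt _ hk0) hkL)] at this
    calc x = k * (x / k) + x % k := (Nat.div_add_mod x k).symm
      _ = k * (y / k) + y % k := by rw [hdiv, hmod]
      _ = y := Nat.div_add_mod y k
  set A : Finset (Fin (L ^ 2)) := (Finset.range N).image ι with hA
  have hAcard : A.card = N := by
    rw [hA, Finset.card_image_of_injOn (fun x hx y hy => hinj x hx y hy), Finset.card_range]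
  have hgι : ∀ j, g (ι j) = ε (ψ j) := by
    intro j
    show ε2 (σ (σ.symm (eV (ψ j)))) = ε (ψ j)
    rw [Equiv.apply_symm_apply]
    show ε (eV.symm (eV (ψ j))) = ε (ψ j)
    rw [Equiv.symm_apply_apply]
  rw [hlamg]
  calc 6 * t * (N : ℝ) - 12 * Real.pi ^ 2 * t * (N : ℝ) ^ 2 / (L : ℝ) ^ 2
      = ∑ _j ∈ Finset.range N, (6 * t - 12 * Real.pi ^ 2 * t * (N : ℝ) / (L : ℝ) ^ 2) := by
        rw [Finset.sum_const, Finset.card_range, nsmul_eq_mul]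
        field_simp
    _ ≤ ∑ j ∈ Finset.range N, ε (ψ j) := Finset.sum_le_sum hterm
    _ = ∑ j ∈ A, g j := by
        rw [hA, Finset.sum_image hinj]
        exact Finset.sum_congr rfl fun j _ => (hgι j).symm
    _ ≤ ∑ j ∈ Finset.univ.filter (fun j : Fin (L ^ 2) => L ^ 2 - N ≤ (j : ℕ)), g j :=
        TB.sum_le_sum_top hN1 hNn g hgmono A hAcard
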